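/- arXiv:1208.1087 — 11 statements merged into one kernel-verified Lean document; each statement's English description precedes it below -/
import Mathlib

section
/- Let (β, γ, p) be a coder model and suppose there is c₀ ∈ C with γ(k) = c₀ for all k ∈ {1,...,N}. Then for every β' ∈ [0,1] with β' ≤ β + (1−β)·p_{c₀} there exists a function p' : C → [0,1] with Σ_{c∈C} p'_c = 1 such that for all c ∈ C and all k ∈ {1,...,N}: β·δ_{c,γ(k)} + (1−β)·p_c = β'·δ_{c,γ(k)} + (1−β')·p'_c (where δ is the Kronecker delta). -/
/-- Proposition 1: if all items have the same true category `c₀`, then for any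
`β' ≤ β + (1-β)·p c₀` there is an a priori distribution `p'` reproducing the
same assignment probabilities. -/
theorem stmt_0 {C : Type*} [Fintype C] [DecidableEq C] [Nonempty C]
    {N : ℕ} (hN : 1 ≤ N) (γ : Fin N → C)
    (β : ℝ) (hβ0 : 0 ≤ β) (hβ1 : β ≤ 1)
    (p : C → ℝ) (hp0 : ∀ c, 0 ≤ p c) (hp1 : ∀ c, p c ≤ 1) (hpsum : ∑ c, p c = 1)
    (c₀ : C) (hγ : ∀ k, γ k = c₀)
    (β' : ℝ) (hβ'0 : 0 ≤ β') (hβ'1 : β' ≤ 1)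
    (hβ'le : β' ≤ β + (1 - β) * p c₀) :
    ∃ p' : C → ℝ, (∀ c, 0 ≤ p' c ∧ p' c ≤ 1) ∧ (∑ c, p' c = 1) ∧
      ∀ (c : C) (k : Fin N),
        β * (if c = γ k then 1 else 0) + (1 - β) * p c
          = β' * (if c = γ k then 1 else 0) + (1 - β') * p' c := by
  have hpair : ∀ c : C, c ≠ c₀ → p c + p c₀ ≤ 1 := by
    intro c hc
    have : ∑ x ∈ ({c, c₀} : Finset C), p x ≤ ∑ x, p x := by
      apply Finset.sum_le_sum_of_subset_of_nonneg (Finset.subset_univ _)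
      intro i _ _; exact hp0 i
    rwa [Finset.sum_pair hc, hpsum] at this
  rcases eq_or_lt_of_le hβ'1 with hβ'eq | hβ'lt
  · -- β' = 1 : then β + (1-β) * p c₀ = 1 and p' = p works
    have h1 : β + (1 - β) * p c₀ = 1 := by
      have hle : β + (1 - β) * p c₀ ≤ 1 := by nlinarith [hp1 c₀]
      linarith [hβ'le, hβ'eq.symm ▸ hβ'le]
    have hkey : ∀ c : C, c ≠ c₀ → (1 - β) * p c = 0 := by
      intro c hc
      have h2 : (1 - β) * (1 - p c₀) = 0 := by ring_nf; linarith
      rcases mul_eq_zero.mp h2 with h | h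
      · rw [h, zero_mul]
      · have hpc0 : p c₀ = 1 := by linarith
        have : p c = 0 := by nlinarith [hpair c hc, hp0 c]
        rw [this, mul_zero]
    refine ⟨p, fun c => ⟨hp0 c, hp1 c⟩, hpsum, ?_⟩
    intro c k
    subst hβ'eq
    rw [hγ k]
    by_cases hc : c = c₀
    · simp [hc]; linarith
    · rw [if_neg hc]
      have := hkey c hc
      nlinarith
  · -- β' < 1
    have hne : (1 : ℝ) - β' ≠ 0 := by linarith
    set q : C → ℝ := fun c =>
      (β * (if c = c₀ then 1 else 0) + (1 - β) * p c - β' * (if c = c₀ then 1 else 0)) / (1 - β')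
      with hq
    have hnum_nonneg : ∀ c, 0 ≤ β * (if c = c₀ then 1 else 0) + (1 - β) * p c
        - β' * (if c = c₀ then 1 else 0) := by
      intro c
      by_cases hc : c = c₀
      · simp [hc]; linarith
      · simp [hc]; nlinarith [hp0 c]
    have hnum_le : ∀ c, β * (if c = c₀ then 1 else 0) + (1 - β) * p c
        - β' * (if c = c₀ then 1 else 0) ≤ 1 - β' := by
      intro c
      by_cases hc : c = c₀
      · simp [hc]; nlinarith [hp1 c₀]
      · simp [hc]
        have := hpair c hc
        nlinarith [hp0 c₀]
    refine ⟨q, ?_, ?_, ?_⟩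
    · intro c
      constructor
      · exact div_nonneg (hnum_nonneg c) (by linarith)
      · rw [hq]
        exact div_le_one_of_le₀ (hnum_le c) (by linarith)
    · rw [hq]
      simp only
      rw [← Finset.sum_div, div_eq_one_iff_eq hne]
      rw [Finset.sum_sub_distrib, Finset.sum_add_distrib, ← Finset.mul_sum, ← Finset.mul_sum,
        ← Finset.mul_sum]
      simp [hpsum, Finset.sum_ite_eq' Finset.univ c₀ (fun _ => (1:ℝ))]
    · intro c k
      rw [hγ k, hq]
      field_simp
      ring
end

section
/- Let (β, γ, p) be a coder model with τ_c < 1 for all c ∈ C. Then e_{2,c} = e_{1,c}² holds for all c ∈ C if and only if β = 0. -/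
/-- Proposition 2, part 2. -/
theorem stmt_3 {C : Type*} [Fintype C] [DecidableEq C] [Nonempty C]
    {N : ℕ} (hN : 1 ≤ N) (γ : Fin N → C)
    (β : ℝ) (hβ0 : 0 ≤ β) (hβ1 : β ≤ 1)
    (p : C → ℝ) (hp0 : ∀ c, 0 ≤ p c) (hp1 : ∀ c, p c ≤ 1) (hpsum : ∑ c, p c = 1)
    (τ : C → ℝ)
    (hτ : ∀ c, τ c = ((Finset.univ.filter (fun k : Fin N => γ k = c)).card : ℝ) / (N : ℝ))
    (e1 : C → ℝ) (he1 : ∀ c, e1 c = β * τ c + (1 - β) * p c)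
    (e2 : C → ℝ)
    (he2 : ∀ c, e2 c = β ^ 2 * τ c + 2 * β * (1 - β) * τ c * p c + (1 - β) ^ 2 * p c ^ 2)
    (hτlt : ∀ c, τ c < 1) :
    (∀ c, e2 c = e1 c ^ 2) ↔ β = 0 := by
  constructor
  · intro h
    set c₀ := γ ⟨0, hN⟩ with hc₀
    have hmem : (⟨0, hN⟩ : Fin N) ∈ Finset.univ.filter (fun k : Fin N => γ k = c₀) := by
      simp [hc₀]
    have hcard : 1 ≤ (Finset.univ.filter (fun k : Fin N => γ k = c₀)).card :=
      Finset.card_pos.mpr ⟨_, hmem⟩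
    have hNpos : (0 : ℝ) < N := by exact_mod_cast hN
    have hτpos : 0 < τ c₀ := by
      rw [hτ]
      apply div_pos _ hNpos
      exact_mod_cast hcard
    have key : β ^ 2 * (τ c₀ * (1 - τ c₀)) = 0 := by
      have := h c₀
      rw [he2, he1] at this
      nlinarith [this]
    have hτlt' := hτlt c₀
    have : β ^ 2 = 0 := by
      rcases mul_eq_zero.mp key with h1 | h2
      · exact h1
      · nlinarith
    exact pow_eq_zero_iff (by norm_num) |>.mp this
  · intro hβ c
    rw [he2, he1, hβ]
    ring
end

section
/- Let (β, γ, p) be a coder model with τ_c < 1 for all c ∈ C, and suppose e_{2,c₀} ≠ e_{1,c₀}² for some c₀ ∈ C. Then e_{2,c₀} > e_{1,c₀}², β = √((e_{2,c₀} − e_{1,c₀}²)/(τ_{c₀}·(1−τ_{c₀}))), and if moreover β < 1, then p_{c₀} = (e_{1,c₀} − β·τ_{c₀})/(1−β). -/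
/-- Proposition 2, part 3. -/
theorem stmt_4 {C : Type*} [Fintype C] [DecidableEq C] [Nonempty C]
    {N : ℕ} (hN : 1 ≤ N) (γ : Fin N → C)
    (β : ℝ) (hβ0 : 0 ≤ β) (hβ1 : β ≤ 1)
    (p : C → ℝ) (hp0 : ∀ c, 0 ≤ p c) (hp1 : ∀ c, p c ≤ 1) (hpsum : ∑ c, p c = 1)
    (τ : C → ℝ)
    (hτ : ∀ c, τ c = ((Finset.univ.filter (fun k : Fin N => γ k = c)).card : ℝ) / (N : ℝ))
    (e1 : C → ℝ) (he1 : ∀ c, e1 c = β * τ c + (1 - β) * p c)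
    (e2 : C → ℝ)
    (he2 : ∀ c, e2 c = β ^ 2 * τ c + 2 * β * (1 - β) * τ c * p c + (1 - β) ^ 2 * p c ^ 2)
    (hτlt : ∀ c, τ c < 1)
    (c₀ : C) (h : e2 c₀ ≠ e1 c₀ ^ 2) :
    e1 c₀ ^ 2 < e2 c₀ ∧
    β = Real.sqrt ((e2 c₀ - e1 c₀ ^ 2) / (τ c₀ * (1 - τ c₀))) ∧
    (β < 1 → p c₀ = (e1 c₀ - β * τ c₀) / (1 - β)) := by
  have hτ0 : 0 ≤ τ c₀ := by
    rw [hτ]; positivity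
  have key : e2 c₀ - e1 c₀ ^ 2 = β ^ 2 * (τ c₀ * (1 - τ c₀)) := by
    rw [he1, he2]; ring
  have hne : β ^ 2 * (τ c₀ * (1 - τ c₀)) ≠ 0 := by
    rw [← key]; exact sub_ne_zero_of_ne h
  have ht1 : 0 ≤ 1 - τ c₀ := by linarith [hτlt c₀]
  have htpos : 0 < τ c₀ * (1 - τ c₀) := by
    rcases lt_or_eq_of_le (mul_nonneg hτ0 ht1) with h' | h'
    · exact h'
    · exact absurd (by rw [← h', mul_zero]) hne
  have hβpos : 0 < β ^ 2 := by
    rcases lt_or_eq_of_le (sq_nonneg β) with h' | h'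
    · exact h'
    · exact absurd (by rw [← h', zero_mul]) hne
  refine ⟨by nlinarith, ?_, ?_⟩
  · rw [key, mul_div_assoc, div_self htpos.ne', mul_one, Real.sqrt_sq hβ0]
  · intro hβlt
    have : (1 - β) * p c₀ = e1 c₀ - β * τ c₀ := by rw [he1]; ring
    rw [eq_div_iff (by linarith : (1 : ℝ) - β ≠ 0)]
    linarith
end

section
/- Let (β, γ, p) be a coder model and suppose there are real numbers π₀, π₁ with π₀ ≤ p_c ≤ π₁ < 1 for all c ∈ C. Let e₂ := Σ_{c∈C} e_{2,c}. Then √(max(0, e₂ − π₁)/(1−π₁)) ≤ β ≤ √((e₂ − π₀)/(1−π₀)). -/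
/-- Proposition 3: estimates for β from bounds on the a priori distribution. -/
theorem stmt_5 {C : Type*} [Fintype C] [DecidableEq C] [Nonempty C]
    {N : ℕ} (hN : 1 ≤ N) (γ : Fin N → C)
    (β : ℝ) (hβ0 : 0 ≤ β) (hβ1 : β ≤ 1)
    (p : C → ℝ) (hp0 : ∀ c, 0 ≤ p c) (hp1 : ∀ c, p c ≤ 1) (hpsum : ∑ c, p c = 1)
    (τ : C → ℝ)
    (hτ : ∀ c, τ c = ((Finset.univ.filter (fun k : Fin N => γ k = c)).card : ℝ) / (N : ℝ))
    (e2 : C → ℝ)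
    (he2 : ∀ c, e2 c = β ^ 2 * τ c + 2 * β * (1 - β) * τ c * p c + (1 - β) ^ 2 * p c ^ 2)
    (π₀ π₁ : ℝ) (hlo : ∀ c, π₀ ≤ p c) (hhi : ∀ c, p c ≤ π₁) (hπ₁ : π₁ < 1) :
    Real.sqrt (max 0 ((∑ c, e2 c) - π₁) / (1 - π₁)) ≤ β ∧
    β ≤ Real.sqrt (((∑ c, e2 c) - π₀) / (1 - π₀)) := by
  have hNpos : (0:ℝ) < (N:ℝ) := by exact_mod_cast hN
  have hτ0 : ∀ c, 0 ≤ τ c := by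
    intro c; rw [hτ c]; positivity
  have hτsum : ∑ c, τ c = 1 := by
    have hcard : (Finset.univ : Finset (Fin N)).card
        = ∑ c : C, ((Finset.univ.filter (fun k : Fin N => γ k = c)).card) := by
      exact Finset.card_eq_sum_card_fiberwise (fun x _ => Finset.mem_univ (γ x))
    have : ∑ c, τ c = (∑ c : C, ((Finset.univ.filter (fun k : Fin N => γ k = c)).card : ℝ)) / N := by
      rw [Finset.sum_div]; exact Finset.sum_congr rfl fun c _ => hτ c
    rw [this]
    rw [← Nat.cast_sum, ← hcard]
    simp [Finset.card_univ]
    omega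
  -- bounds on π₀, π₁
  obtain ⟨c₀⟩ := (inferInstance : Nonempty C)
  have hπ₀1 : π₀ < 1 := lt_of_le_of_lt (le_trans (hlo c₀) (hhi c₀)) hπ₁
  have hπ₀0 : 0 ≤ π₁ := le_trans (hp0 c₀) (hhi c₀)
  -- sums
  have hA1 : ∑ c, τ c * p c ≤ π₁ := by
    calc ∑ c, τ c * p c ≤ ∑ c, τ c * π₁ :=
        Finset.sum_le_sum fun c _ => mul_le_mul_of_nonneg_left (hhi c) (hτ0 c)
      _ = π₁ := by rw [← Finset.sum_mul, hτsum, one_mul]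
  have hA0 : π₀ ≤ ∑ c, τ c * p c := by
    calc π₀ = ∑ c, τ c * π₀ := by rw [← Finset.sum_mul, hτsum, one_mul]
      _ ≤ ∑ c, τ c * p c :=
        Finset.sum_le_sum fun c _ => mul_le_mul_of_nonneg_left (hlo c) (hτ0 c)
  have hB1 : ∑ c, p c ^ 2 ≤ π₁ := by
    calc ∑ c, p c ^ 2 ≤ ∑ c, π₁ * p c := by
          refine Finset.sum_le_sum fun c _ => ?_
          have := mul_le_mul_of_nonneg_right (hhi c) (hp0 c)
          nlinarith [hp0 c]
      _ = π₁ := by rw [← Finset.mul_sum, hpsum, mul_one]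
  have hB0 : π₀ ≤ ∑ c, p c ^ 2 := by
    calc π₀ = ∑ c, π₀ * p c := by rw [← Finset.mul_sum, hpsum, mul_one]
      _ ≤ ∑ c, p c ^ 2 := by
          refine Finset.sum_le_sum fun c _ => ?_
          have := mul_le_mul_of_nonneg_right (hlo c) (hp0 c)
          nlinarith [hp0 c]
  have hsum : ∑ c, e2 c = β ^ 2 + 2 * β * (1 - β) * (∑ c, τ c * p c)
      + (1 - β) ^ 2 * (∑ c, p c ^ 2) := by
    have : ∑ c, e2 c = ∑ c, (β ^ 2 * τ c + 2 * β * (1 - β) * (τ c * p c)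
        + (1 - β) ^ 2 * p c ^ 2) := by
      refine Finset.sum_congr rfl fun c _ => ?_
      rw [he2 c]; ring
    rw [this, Finset.sum_add_distrib, Finset.sum_add_distrib, ← Finset.mul_sum,
      ← Finset.mul_sum, ← Finset.mul_sum, hτsum, mul_one]
  have hb : 0 ≤ 1 - β := by linarith
  have hbb : 0 ≤ 2 * β * (1 - β) := by positivity
  have hsq : 0 ≤ (1 - β)^2 := sq_nonneg _
  have hupper : ∑ c, e2 c ≤ β ^ 2 + π₁ * (1 - β ^ 2) := by
    rw [hsum]
    nlinarith [mul_le_mul_of_nonneg_left hA1 hbb, mul_le_mul_of_nonneg_left hB1 hsq]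
  have hlower : β ^ 2 + π₀ * (1 - β ^ 2) ≤ ∑ c, e2 c := by
    rw [hsum]
    nlinarith [mul_le_mul_of_nonneg_left hA0 hbb, mul_le_mul_of_nonneg_left hB0 hsq]
  constructor
  · -- sqrt (max 0 (e₂ - π₁) / (1 - π₁)) ≤ β
    have h1 : max 0 ((∑ c, e2 c) - π₁) / (1 - π₁) ≤ β ^ 2 := by
      rw [div_le_iff₀ (by linarith : (0:ℝ) < 1 - π₁)]
      apply max_le
      · nlinarith [sq_nonneg β]
      · nlinarith
    calc Real.sqrt (max 0 ((∑ c, e2 c) - π₁) / (1 - π₁)) ≤ Real.sqrt (β ^ 2) :=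
        Real.sqrt_le_sqrt h1
      _ = β := Real.sqrt_sq hβ0
  · have h2 : β ^ 2 ≤ ((∑ c, e2 c) - π₀) / (1 - π₀) := by
      rw [le_div_iff₀ (by linarith : (0:ℝ) < 1 - π₀)]
      nlinarith
    calc β = Real.sqrt (β ^ 2) := (Real.sqrt_sq hβ0).symm
      _ ≤ _ := Real.sqrt_le_sqrt h2
end

section
/- Let (β, γ, p) be a coder model with m := #C ≥ 2 and suppose p is the uniform distribution, i.e. p_c = 1/m for all c ∈ C. Let e₂ := Σ_{c∈C} e_{2,c}. Then β² = (e₂ − 1/m)/(1 − 1/m). -/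
/-- The S-value formula in the uniform case. -/
theorem stmt_6 {C : Type*} [Fintype C] [DecidableEq C] [Nonempty C]
    {N : ℕ} (hN : 1 ≤ N) (γ : Fin N → C)
    (β : ℝ) (hβ0 : 0 ≤ β) (hβ1 : β ≤ 1)
    (p : C → ℝ) (hp0 : ∀ c, 0 ≤ p c) (hp1 : ∀ c, p c ≤ 1) (hpsum : ∑ c, p c = 1)
    (τ : C → ℝ)
    (hτ : ∀ c, τ c = ((Finset.univ.filter (fun k : Fin N => γ k = c)).card : ℝ) / (N : ℝ))
    (e2 : C → ℝ)
    (he2 : ∀ c, e2 c = β ^ 2 * τ c + 2 * β * (1 - β) * τ c * p c + (1 - β) ^ 2 * p c ^ 2)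
    (hm : 2 ≤ Fintype.card C)
    (hunif : ∀ c, p c = 1 / (Fintype.card C : ℝ)) :
    β ^ 2 = ((∑ c, e2 c) - 1 / (Fintype.card C : ℝ)) / (1 - 1 / (Fintype.card C : ℝ)) := by
  set m : ℝ := (Fintype.card C : ℝ) with hmdef
  have hm1 : (2:ℝ) ≤ m := by rw [hmdef]; exact_mod_cast hm
  have hmne : m ≠ 0 := by linarith
  have hNne : (N:ℝ) ≠ 0 := by positivity
  have hτsum : ∑ c, τ c = 1 := by
    have hcard : ∑ c, ((Finset.univ.filter (fun k : Fin N => γ k = c)).card : ℝ)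
        = (N : ℝ) := by
      have := Finset.card_eq_sum_card_fiberwise
        (f := γ) (s := (Finset.univ : Finset (Fin N))) (t := Finset.univ)
        (fun x _ => Finset.mem_univ _)
      simp only [Finset.card_univ, Fintype.card_fin] at this
      exact_mod_cast this.symm
    simp only [hτ, div_eq_mul_inv, ← Finset.sum_mul]
    rw [hcard]
    field_simp
  have hsum : ∑ c, e2 c = β ^ 2 * (1 - 1/m) + 1/m := by
    have : ∑ c, e2 c = β ^ 2 * (∑ c, τ c) + (2 * β * (1-β) / m) * (∑ c, τ c)
        + (1-β)^2 * (1/m^2) * m := by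
      simp only [he2, hunif, Finset.sum_add_distrib, ← Finset.sum_mul,
        ← Finset.mul_sum]
      ring_nf
      simp [Finset.sum_const, Finset.card_univ, hmdef]
      ring
    rw [this, hτsum]
    field_simp
    ring
  have hne : 1 - 1/m ≠ 0 := by
    have : 1/m ≤ 1/2 := by
      apply one_div_le_one_div_of_le <;> linarith
    intro h; rw [sub_eq_zero] at h; linarith
  rw [hsum]
  field_simp
  rw [add_sub_cancel_right, mul_div_assoc, div_self (by linarith : m - 1 ≠ 0), mul_one]
end

section
/- Let (β, γ, p) be a coder model with τ_c < 1 for all c ∈ C, and suppose c ∈ C satisfies 0 < p_c < 1. Then, writing A := (1 − e_{1,c})/(1 − p_c) + e_{1,c}/p_c, one has β = 1 − A/2 + √(A²/4 − (e_{1,c} − e_{2,c})/(p_c·(1 − p_c))). -/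
/-- Proposition 4, part 1 (third case). -/
theorem stmt_10 {C : Type*} [Fintype C] [DecidableEq C] [Nonempty C]
    {N : ℕ} (hN : 1 ≤ N) (γ : Fin N → C)
    (β : ℝ) (hβ0 : 0 ≤ β) (hβ1 : β ≤ 1)
    (p : C → ℝ) (hp0 : ∀ c, 0 ≤ p c) (hp1 : ∀ c, p c ≤ 1) (hpsum : ∑ c, p c = 1)
    (τ : C → ℝ)
    (hτ : ∀ c, τ c = ((Finset.univ.filter (fun k : Fin N => γ k = c)).card : ℝ) / (N : ℝ))
    (e1 : C → ℝ) (he1 : ∀ c, e1 c = β * τ c + (1 - β) * p c)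
    (e2 : C → ℝ)
    (he2 : ∀ c, e2 c = β ^ 2 * τ c + 2 * β * (1 - β) * τ c * p c + (1 - β) ^ 2 * p c ^ 2)
    (hτlt : ∀ c, τ c < 1)
    (c : C) (hpc0 : 0 < p c) (hpc1 : p c < 1) :
    β = 1 - ((1 - e1 c) / (1 - p c) + e1 c / p c) / 2
        + Real.sqrt (((1 - e1 c) / (1 - p c) + e1 c / p c) ^ 2 / 4
            - (e1 c - e2 c) / (p c * (1 - p c))) := by
  set q := p c with hq
  set t := τ c with ht
  have ht0 : 0 ≤ t := by
    rw [ht, hτ]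
    positivity
  have ht1 : t < 1 := hτlt c
  have hq0 : (0:ℝ) < q := hpc0
  have hq1 : q < 1 := hpc1
  have hqne : q ≠ 0 := ne_of_gt hq0
  have h1q : (0:ℝ) < 1 - q := by linarith
  have h1qne : (1:ℝ) - q ≠ 0 := ne_of_gt h1q
  set A := (1 - e1 c) / (1 - q) + e1 c / q with hA
  have hnn : 0 ≤ β - 1 + A / 2 := by
    have hval : β - 1 + A / 2 = β * (q * (1 - t) + t * (1 - q)) / (2 * q * (1 - q)) := by
      rw [hA, he1]
      field_simp
      ring
    rw [hval]
    apply div_nonneg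
    · apply mul_nonneg hβ0
      have := mul_nonneg (le_of_lt hq0) (by linarith : (0:ℝ) ≤ 1 - t)
      have := mul_nonneg ht0 (le_of_lt h1q)
      linarith
    · positivity
  have hkey : A ^ 2 / 4 - (e1 c - e2 c) / (q * (1 - q)) = (β - 1 + A / 2) ^ 2 := by
    rw [hA, he1, he2]
    field_simp
    ring
  rw [hkey, Real.sqrt_sq hnn]
  ring
end

section
/- Let (β, γ, p) be a coder model with τ_c < 1 for all c ∈ C, let C* := {c ∈ C : e_{2,c} ≠ e_{1,c}²}, and assume #C* = 2. Then for any c ∈ C*, setting a := e_{2,c} − e_{1,c}² and b := (e_{3,c} − e_{1,c}³)/(e_{2,c} − e_{1,c}²) − 3·e_{1,c}, one has β = √(4a + b²). -/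
/-- Theorem 1, part 3: the case #C* = 2. -/
theorem stmt_15 {C : Type*} [Fintype C] [DecidableEq C] [Nonempty C]
    {N : ℕ} (hN : 1 ≤ N) (γ : Fin N → C)
    (β : ℝ) (hβ0 : 0 ≤ β) (hβ1 : β ≤ 1)
    (p : C → ℝ) (hp0 : ∀ c, 0 ≤ p c) (hp1 : ∀ c, p c ≤ 1) (hpsum : ∑ c, p c = 1)
    (τ : C → ℝ)
    (hτ : ∀ c, τ c = ((Finset.univ.filter (fun k : Fin N => γ k = c)).card : ℝ) / (N : ℝ))
    (e1 : C → ℝ) (he1 : ∀ c, e1 c = β * τ c + (1 - β) * p c)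
    (e2 : C → ℝ)
    (he2 : ∀ c, e2 c = β ^ 2 * τ c + 2 * β * (1 - β) * τ c * p c + (1 - β) ^ 2 * p c ^ 2)
    (e3 : C → ℝ)
    (he3 : ∀ c, e3 c = β ^ 3 * τ c + 3 * β ^ 2 * (1 - β) * τ c * p c
      + 3 * β * (1 - β) ^ 2 * τ c * p c ^ 2 + (1 - β) ^ 3 * p c ^ 3)
    (hτlt : ∀ c, τ c < 1)
    (hcard : (Finset.univ.filter (fun c => e2 c ≠ e1 c ^ 2)).card = 2) :
    ∀ c ∈ Finset.univ.filter (fun c => e2 c ≠ e1 c ^ 2),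
      β = Real.sqrt (4 * (e2 c - e1 c ^ 2)
        + ((e3 c - e1 c ^ 3) / (e2 c - e1 c ^ 2) - 3 * e1 c) ^ 2) := by
  intro c hc
  simp only [Finset.mem_filter] at hc
  have ha : e2 c - e1 c ^ 2 ≠ 0 := sub_ne_zero.mpr hc.2
  have key : e3 c - e1 c ^ 3
      = (e2 c - e1 c ^ 2) * (β * (1 + τ c) + 3 * (1 - β) * p c) := by
    rw [he3, he2, he1]; ring
  have hdiv : (e3 c - e1 c ^ 3) / (e2 c - e1 c ^ 2)
      = β * (1 + τ c) + 3 * (1 - β) * p c := by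
    rw [key, mul_div_cancel_left₀ _ ha]
  have h4 : 4 * (e2 c - e1 c ^ 2)
      + ((e3 c - e1 c ^ 3) / (e2 c - e1 c ^ 2) - 3 * e1 c) ^ 2 = β ^ 2 := by
    rw [hdiv, he2, he1]; ring
  rw [h4, Real.sqrt_sq hβ0]
end

section
/- Let (β, γ, p) be a coder model with τ_c < 1 for all c ∈ C, let C* := {c ∈ C : e_{2,c} ≠ e_{1,c}²}, and assume #C* ≥ 3. Then β = (1/(#C* − 2)) · ( Σ_{c ∈ C*} (e_{3,c} − e_{1,c}³)/(e_{2,c} − e_{1,c}²) + 3·Σ_{c ∈ C \setminus C*} e_{1,c} − 3 ). -/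
/-- Theorem 1, part 4: the case #C* ≥ 3, using triple coincidences. -/
theorem stmt_16 {C : Type*} [Fintype C] [DecidableEq C] [Nonempty C]
    {N : ℕ} (hN : 1 ≤ N) (γ : Fin N → C)
    (β : ℝ) (hβ0 : 0 ≤ β) (hβ1 : β ≤ 1)
    (p : C → ℝ) (hp0 : ∀ c, 0 ≤ p c) (hp1 : ∀ c, p c ≤ 1) (hpsum : ∑ c, p c = 1)
    (τ : C → ℝ)
    (hτ : ∀ c, τ c = ((Finset.univ.filter (fun k : Fin N => γ k = c)).card : ℝ) / (N : ℝ))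
    (e1 : C → ℝ) (he1 : ∀ c, e1 c = β * τ c + (1 - β) * p c)
    (e2 : C → ℝ)
    (he2 : ∀ c, e2 c = β ^ 2 * τ c + 2 * β * (1 - β) * τ c * p c + (1 - β) ^ 2 * p c ^ 2)
    (e3 : C → ℝ)
    (he3 : ∀ c, e3 c = β ^ 3 * τ c + 3 * β ^ 2 * (1 - β) * τ c * p c
      + 3 * β * (1 - β) ^ 2 * τ c * p c ^ 2 + (1 - β) ^ 3 * p c ^ 3)
    (hτlt : ∀ c, τ c < 1)
    (hcard : 3 ≤ (Finset.univ.filter (fun c => e2 c ≠ e1 c ^ 2)).card) :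
    β = (1 / (((Finset.univ.filter (fun c => e2 c ≠ e1 c ^ 2)).card : ℝ) - 2))
      * ((∑ c ∈ Finset.univ.filter (fun c => e2 c ≠ e1 c ^ 2),
            (e3 c - e1 c ^ 3) / (e2 c - e1 c ^ 2))
        + 3 * (∑ c ∈ Finset.univ \ Finset.univ.filter (fun c => e2 c ≠ e1 c ^ 2), e1 c)
        - 3) := by
  classical
  set S := Finset.univ.filter (fun c => e2 c ≠ e1 c ^ 2) with hS
  have key1 : ∀ c, e2 c - e1 c ^ 2 = β ^ 2 * τ c * (1 - τ c) := by
    intro c; rw [he1 c, he2 c]; ring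
  have key2 : ∀ c, e3 c - e1 c ^ 3
      = (β ^ 2 * τ c * (1 - τ c)) * (β * (1 + τ c) + 3 * (1 - β) * p c) := by
    intro c; rw [he1 c, he3 c]; ring
  have hβne : β ≠ 0 := by
    rintro rfl
    have hall : ∀ c, e2 c = e1 c ^ 2 := fun c => by
      have h := key1 c; simp at h; linarith
    have hempty : S = ∅ :=
      Finset.filter_eq_empty_iff.mpr (fun c _ => by simp [hall c])
    rw [hempty] at hcard
    simp at hcard
  have hτ0 : ∀ c ∉ S, τ c = 0 := by
    intro c hc
    have he : e2 c = e1 c ^ 2 := by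
      by_contra h; exact hc (Finset.mem_filter.mpr ⟨Finset.mem_univ c, h⟩)
    have h0 : β ^ 2 * τ c * (1 - τ c) = 0 := by rw [← key1 c, he]; ring
    have hβ2 : β ^ 2 ≠ 0 := pow_ne_zero _ hβne
    have h1 : (1 - τ c) ≠ 0 := by have := hτlt c; intro h; linarith
    rcases mul_eq_zero.mp h0 with h | h
    · rcases mul_eq_zero.mp h with h | h
      · exact absurd h hβ2
      · exact h
    · exact absurd h h1
  have hNne : (N : ℝ) ≠ 0 := by positivity
  have hsumτ : ∑ c, τ c = 1 := by
    have hcards : ∑ c : C, ((Finset.univ.filter (fun k : Fin N => γ k = c)).card) = N := by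
      have := Finset.card_eq_sum_card_fiberwise
        (f := γ) (s := Finset.univ) (t := Finset.univ) (fun x _ => Finset.mem_univ _)
      simpa using this.symm
    simp only [hτ]
    rw [← Finset.sum_div, ← Nat.cast_sum, hcards, div_self hNne]
  have hsumτS : ∑ c ∈ S, τ c = 1 := by
    rw [← hsumτ]
    exact Finset.sum_subset (Finset.subset_univ S) (fun c _ hc => hτ0 c hc)
  have hratio : ∀ c ∈ S, (e3 c - e1 c ^ 3) / (e2 c - e1 c ^ 2)
      = β * (1 + τ c) + 3 * (1 - β) * p c := by
    intro c hc
    have hne : e2 c - e1 c ^ 2 ≠ 0 := sub_ne_zero.mpr (Finset.mem_filter.mp hc).2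
    have hne' : β ^ 2 * τ c * (1 - τ c) ≠ 0 := key1 c ▸ hne
    rw [key2 c, key1 c, mul_div_cancel_left₀ _ hne']
  have hcomp : ∀ c ∈ Finset.univ \ S, e1 c = (1 - β) * p c := by
    intro c hc
    rw [he1 c, hτ0 c (Finset.mem_sdiff.mp hc).2]; ring
  have hsplit : ∑ c ∈ Finset.univ \ S, p c + ∑ c ∈ S, p c = 1 := by
    rw [Finset.sum_sdiff (Finset.subset_univ S)]; exact hpsum
  have hsumS : ∑ c ∈ S, (β * (1 + τ c) + 3 * (1 - β) * p c)
      = β * S.card + β + 3 * (1 - β) * ∑ c ∈ S, p c := by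
    rw [Finset.sum_add_distrib, ← Finset.mul_sum, ← Finset.mul_sum,
        Finset.sum_add_distrib, Finset.sum_const, hsumτS]
    push_cast; ring
  rw [Finset.sum_congr rfl hratio, hsumS, Finset.sum_congr rfl hcomp, ← Finset.mul_sum]
  have hk3 : (3 : ℝ) ≤ (S.card : ℝ) := by exact_mod_cast hcard
  have hkne : (S.card : ℝ) - 2 ≠ 0 := by intro h; linarith
  have hE : β * (S.card : ℝ) + β + 3 * (1 - β) * (∑ c ∈ S, p c)
      + 3 * ((1 - β) * ∑ c ∈ Finset.univ \ S, p c) - 3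
      = β * ((S.card : ℝ) - 2) := by
    linear_combination (3 - 3 * β) * hsplit
  rw [hE, one_div, mul_comm β, inv_mul_cancel_left₀ hkne]
end

section
/- Let (β, γ, p) be a coder model with τ_c < 1 for all c ∈ C, let C* := {c ∈ C : e_{2,c} ≠ e_{1,c}²}, and suppose C* = {c₁, ..., c_{m*}} (an injective enumeration) with m* ≥ 3. For i, j ∈ {1,...,m*} define ρ_{i,j} := (e_{2,c_i,c_j} − e_{1,c_i}·e_{1,c_j})/(e_{2,c_i,c_i} − e_{1,c_i}²). Then a vector λ ∈ ℝ^{m*} satisfies both (i) λ_i·ρ_{i,j} = λ_k·ρ_{k,j} for all i, j, k ∈ {1,...,m*} with i ≠ j and k ≠ j, and (ii) Σ_{i=1}^{m*} λ_i = m* − 1, if and only if λ_i = 1 − τ_{c_i} for all i. Moreover, for this solution, β = √( (Σ_{c∈C} (e_{2,c} − e_{1,c}²)) / (1 − Σ_{j=1}^{m*} (1 − λ_j)²) ). -/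
/-- Theorem 1, part 5: characterization of (1-τ) as the unique solution of a linear
system in the ρ's, and the resulting formula for β. -/
theorem stmt_17 {C : Type*} [Fintype C] [DecidableEq C] [Nonempty C]
    {N : ℕ} (hN : 1 ≤ N) (γ : Fin N → C)
    (β : ℝ) (hβ0 : 0 ≤ β) (hβ1 : β ≤ 1)
    (p : C → ℝ) (hp0 : ∀ c, 0 ≤ p c) (hp1 : ∀ c, p c ≤ 1) (hpsum : ∑ c, p c = 1)
    (τ : C → ℝ)
    (hτ : ∀ c, τ c = ((Finset.univ.filter (fun k : Fin N => γ k = c)).card : ℝ) / (N : ℝ))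
    (e1 : C → ℝ) (he1 : ∀ c, e1 c = β * τ c + (1 - β) * p c)
    (e2p : C → C → ℝ)
    (he2p : ∀ c₁ c₂, e2p c₁ c₂ = β ^ 2 * (if c₁ = c₂ then 1 else 0) * τ c₁
      + β * (1 - β) * (τ c₁ * p c₂ + τ c₂ * p c₁) + (1 - β) ^ 2 * p c₁ * p c₂)
    (hτlt : ∀ c, τ c < 1)
    (m : ℕ) (hm : 3 ≤ m)
    (cc : Fin m → C) (hinj : Function.Injective cc)
    (hrange : ∀ c : C, (∃ i, cc i = c) ↔ e2p c c ≠ e1 c ^ 2)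
    (ρ : Fin m → Fin m → ℝ)
    (hρ : ∀ i j, ρ i j
      = (e2p (cc i) (cc j) - e1 (cc i) * e1 (cc j)) / (e2p (cc i) (cc i) - e1 (cc i) ^ 2)) :
    (∀ lam : Fin m → ℝ,
      ((∀ i j k : Fin m, i ≠ j → k ≠ j → lam i * ρ i j = lam k * ρ k j) ∧
        ∑ i, lam i = (m : ℝ) - 1)
      ↔ ∀ i, lam i = 1 - τ (cc i)) ∧
    (∀ lam : Fin m → ℝ, (∀ i, lam i = 1 - τ (cc i)) →
      β = Real.sqrt ((∑ c, (e2p c c - e1 c ^ 2)) / (1 - ∑ j, (1 - lam j) ^ 2))) := by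
  have hNpos : (0:ℝ) < N := by exact_mod_cast hN
  have hτ0 : ∀ c, 0 ≤ τ c := fun c => by rw [hτ]; positivity
  have hτsum : ∑ c, τ c = 1 := by
    have hc : (Finset.univ : Finset (Fin N)).card
        = ∑ c, (Finset.univ.filter (fun k : Fin N => γ k = c)).card :=
      Finset.card_eq_sum_card_fiberwise (fun x _ => Finset.mem_univ _)
    have h1 : ∑ c, τ c
        = (∑ c, ((Finset.univ.filter (fun k : Fin N => γ k = c)).card : ℝ)) / N := by
      rw [Finset.sum_div]; exact Finset.sum_congr rfl fun c _ => hτ c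
    rw [h1, ← Nat.cast_sum, ← hc]
    simp [Finset.card_univ]
    omega
  have hdiag : ∀ c, e2p c c - e1 c ^ 2 = β ^ 2 * τ c * (1 - τ c) := by
    intro c; rw [he2p, he1, if_pos rfl]; ring
  have hcross : ∀ c₁ c₂, c₁ ≠ c₂ →
      e2p c₁ c₂ - e1 c₁ * e1 c₂ = -(β ^ 2 * τ c₁ * τ c₂) := by
    intro c₁ c₂ h; rw [he2p, he1, he1, if_neg h]; ring
  have h1τ : ∀ c, (1 : ℝ) - τ c ≠ 0 := fun c => sub_ne_zero.mpr (hτlt c).ne'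
  have i0 : Fin m := ⟨0, by omega⟩
  have hd0 : ∀ i, β ^ 2 * τ (cc i) * (1 - τ (cc i)) ≠ 0 := fun i => by
    rw [← hdiag]; exact sub_ne_zero.mpr ((hrange (cc i)).mp ⟨i, rfl⟩)
  have hβne : β ≠ 0 := fun h => hd0 i0 (by rw [h]; ring)
  have hτne : ∀ i, τ (cc i) ≠ 0 := fun i h => hd0 i (by rw [h]; ring)
  have hτcpos : ∀ i, 0 < τ (cc i) := fun i => lt_of_le_of_ne (hτ0 _) (Ne.symm (hτne i))
  have hτoff : ∀ c : C, c ∉ Finset.univ.image cc → τ c = 0 := by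
    intro c hc
    have hnr : ¬ (∃ i, cc i = c) := by
      rintro ⟨i, hi⟩; exact hc (Finset.mem_image.mpr ⟨i, Finset.mem_univ _, hi⟩)
    have he : e2p c c = e1 c ^ 2 := by
      by_contra h; exact hnr ((hrange c).mpr h)
    have hz : β ^ 2 * τ c * (1 - τ c) = 0 := by
      rw [← hdiag, he]; ring
    rcases mul_eq_zero.mp hz with h' | h'
    · rcases mul_eq_zero.mp h' with h'' | h''
      · exact absurd h'' (pow_ne_zero 2 hβne)
      · exact h''
    · exact absurd h' (h1τ c)
  have hτsum_i : ∑ i, τ (cc i) = 1 := by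
    have h1 : ∑ i, τ (cc i) = ∑ c ∈ Finset.univ.image cc, τ c :=
      (Finset.sum_image (fun x _ y _ h => hinj h)).symm
    have h2 : ∑ c ∈ Finset.univ.image cc, τ c = ∑ c, τ c :=
      Finset.sum_subset (Finset.subset_univ _) (fun c _ hc => hτoff c hc)
    rw [h1, h2, hτsum]
  have hρ' : ∀ i j, i ≠ j → ρ i j = -τ (cc j) / (1 - τ (cc i)) := by
    intro i j hij
    rw [hρ, hcross _ _ (fun h => hij (hinj h)), hdiag]
    rw [div_eq_div_iff (hd0 i) (h1τ _)]
    ring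
  have hsum1 : ∑ k, (1 - τ (cc k)) = (m : ℝ) - 1 := by
    rw [Finset.sum_sub_distrib, hτsum_i]
    simp
  have hm1 : (m : ℝ) - 1 ≠ 0 := by
    have : (3:ℝ) ≤ m := by exact_mod_cast hm
    intro h; linarith
  have hex : ∀ i k : Fin m, ∃ j : Fin m, j ≠ i ∧ j ≠ k := by
    intro i k
    by_contra hcon
    push_neg at hcon
    have hsub : (Finset.univ : Finset (Fin m)) ⊆ {i, k} := by
      intro j _
      rcases eq_or_ne j i with h | h
      · simp [h]
      · simp [hcon j h]
    have hle := Finset.card_le_card hsub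
    have h2 : ({i, k} : Finset (Fin m)).card ≤ 2 := by
      refine le_trans (Finset.card_insert_le _ _) ?_
      simp
    rw [Finset.card_univ, Fintype.card_fin] at hle
    omega
  constructor
  · intro lam
    constructor
    · rintro ⟨h1, h2⟩
      have key : ∀ i k : Fin m, lam i * (1 - τ (cc k)) = lam k * (1 - τ (cc i)) := by
        intro i k
        by_cases hik : i = k
        · rw [hik]
        · obtain ⟨j, hj1, hj2⟩ := hex i k
          have heq := h1 i j k (Ne.symm hj1) (Ne.symm hj2)
          rw [hρ' i j (Ne.symm hj1), hρ' k j (Ne.symm hj2)] at heq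
          rw [mul_div_assoc', mul_div_assoc', div_eq_div_iff (h1τ _) (h1τ _)] at heq
          have h3 : (lam i * (1 - τ (cc k)) - lam k * (1 - τ (cc i))) * τ (cc j) = 0 := by
            linear_combination -heq
          rcases mul_eq_zero.mp h3 with h' | h'
          · linarith [sub_eq_zero.mp h']
          · exact absurd h' (hτne j)
      intro i
      have hs : ∑ k, lam i * (1 - τ (cc k)) = ∑ k, lam k * (1 - τ (cc i)) :=
        Finset.sum_congr rfl fun k _ => key i k
      rw [← Finset.mul_sum, ← Finset.sum_mul, hsum1, h2] at hs
      have := mul_right_cancel₀ hm1 (hs.trans (mul_comm _ _))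
      linarith
    · intro h
      constructor
      · intro i j k hij hkj
        rw [hρ' i j hij, hρ' k j hkj, h i, h k]
        rw [mul_div_assoc', mul_div_assoc', div_eq_div_iff (h1τ _) (h1τ _)]
        ring
      · rw [Finset.sum_congr rfl fun i (_ : i ∈ Finset.univ) => h i, hsum1]
  · intro lam h
    have hA : ∑ c, (e2p c c - e1 c ^ 2) = β ^ 2 * (1 - ∑ c, τ c ^ 2) := by
      calc ∑ c, (e2p c c - e1 c ^ 2)
          = ∑ c, (β ^ 2 * τ c - β ^ 2 * τ c ^ 2) :=
            Finset.sum_congr rfl fun c _ => by rw [hdiag]; ring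
        _ = β ^ 2 * (1 - ∑ c, τ c ^ 2) := by
            rw [Finset.sum_sub_distrib, ← Finset.mul_sum, ← Finset.mul_sum, hτsum]; ring
    have hB : ∑ j, (1 - lam j) ^ 2 = ∑ c, τ c ^ 2 := by
      have h1 : ∑ j, (1 - lam j) ^ 2 = ∑ j, τ (cc j) ^ 2 :=
        Finset.sum_congr rfl fun j _ => by rw [h j]; ring
      have h2 : ∑ j, τ (cc j) ^ 2 = ∑ c ∈ Finset.univ.image cc, τ c ^ 2 := by
        rw [Finset.sum_image (fun x _ y _ hxy => hinj hxy)]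
      have h3 : ∑ c ∈ Finset.univ.image cc, τ c ^ 2 = ∑ c, τ c ^ 2 :=
        Finset.sum_subset (Finset.subset_univ _) (fun c _ hc => by rw [hτoff c hc]; ring)
      rw [h1, h2, h3]
    have hlt : ∑ c, τ c ^ 2 < 1 := by
      have : ∑ c, τ c ^ 2 < ∑ c, τ c := by
        refine Finset.sum_lt_sum (fun c _ => by nlinarith [hτ0 c, hτlt c]) ?_
        exact ⟨cc i0, Finset.mem_univ _, by nlinarith [hτcpos i0, hτlt (cc i0)]⟩
      linarith [hτsum ▸ this]
    rw [hA, hB, mul_div_assoc, div_self (by intro h'; rw [sub_eq_zero] at h'; exact hlt.ne h'.symm),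
      mul_one, Real.sqrt_sq hβ0]
end

section
/- Let (β, γ, p) be a coder model with τ_c < 1 for all c ∈ C, let C* := {c ∈ C : e_{2,c} ≠ e_{1,c}²}, and let c_i, c_j ∈ C*. Then (e_{2,c_i,c_j} − e_{1,c_i}·e_{1,c_j})/(e_{2,c_i} − e_{1,c_i}²) = (δ_{c_i,c_j}·τ_{c_i} − τ_{c_i}·τ_{c_j})/(τ_{c_i}·(1 − τ_{c_i})), where δ is the Kronecker delta. -/
/-- The identity `ρ_{i,j} = (δ_{i,j}τ_i − τ_i τ_j)/(τ_i(1−τ_i))` for elements of C*. -/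
theorem stmt_18 {C : Type*} [Fintype C] [DecidableEq C] [Nonempty C]
    {N : ℕ} (hN : 1 ≤ N) (γ : Fin N → C)
    (β : ℝ) (hβ0 : 0 ≤ β) (hβ1 : β ≤ 1)
    (p : C → ℝ) (hp0 : ∀ c, 0 ≤ p c) (hp1 : ∀ c, p c ≤ 1) (hpsum : ∑ c, p c = 1)
    (τ : C → ℝ)
    (hτ : ∀ c, τ c = ((Finset.univ.filter (fun k : Fin N => γ k = c)).card : ℝ) / (N : ℝ))
    (e1 : C → ℝ) (he1 : ∀ c, e1 c = β * τ c + (1 - β) * p c)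
    (e2p : C → C → ℝ)
    (he2p : ∀ c₁ c₂, e2p c₁ c₂ = β ^ 2 * (if c₁ = c₂ then 1 else 0) * τ c₁
      + β * (1 - β) * (τ c₁ * p c₂ + τ c₂ * p c₁) + (1 - β) ^ 2 * p c₁ * p c₂)
    (hτlt : ∀ c, τ c < 1)
    (ci cj : C) (hi : e2p ci ci ≠ e1 ci ^ 2) (hj : e2p cj cj ≠ e1 cj ^ 2) :
    (e2p ci cj - e1 ci * e1 cj) / (e2p ci ci - e1 ci ^ 2)
      = ((if ci = cj then 1 else 0) * τ ci - τ ci * τ cj) / (τ ci * (1 - τ ci)) := by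
  have key : ∀ c₁ c₂, e2p c₁ c₂ - e1 c₁ * e1 c₂
      = β ^ 2 * ((if c₁ = c₂ then 1 else 0) * τ c₁ - τ c₁ * τ c₂) := by
    intro c₁ c₂
    rw [he2p, he1, he1]
    split_ifs <;> ring
  have hnum := key ci cj
  have hden := key ci ci
  simp only [eq_self_iff_true, if_true, one_mul] at hden
  have hden' : e2p ci ci - e1 ci ^ 2 = β ^ 2 * (τ ci * (1 - τ ci)) := by
    rw [sq (e1 ci), hden]; ring
  have hβ2 : β ^ 2 ≠ 0 := by
    intro h
    apply hi
    have : e2p ci ci - e1 ci ^ 2 = 0 := by rw [hden', h, zero_mul]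
    linarith
  rw [hnum, hden', mul_div_mul_left _ _ hβ2]
end

section
/- Let (β, γ, p) be a coder model with C = {c₁, c₂} (exactly two categories) and τ_c < 1 for all c ∈ C. Let e₁ := max(e_{1,c₁}, e_{1,c₂}) and define I := [0,1] if e₁ = 1, and I := [0, 2(1−e₁)] ∪ [1 − e₁ + β²·τ_{c₁}(1−τ_{c₁})/(1−e₁), 1] if e₁ < 1. Suppose β' ∈ [0,1] satisfies β' ∈ [2β·√(τ_{c₁}(1−τ_{c₁})), e₁ + β²·τ_{c₁}(1−τ_{c₁})/e₁] ∩ I and β'² = 4β²·τ_{c₁}(1−τ_{c₁})/(1 − n²/N²) for some n ∈ {1,...,N} with n + N even. Then there exist a function γ' : {1,...,N} → C and a distribution p' : C → [0,1] with Σ_{c∈C} p'_c = 1 such that the coder model (β', γ', p') has the same expectation values as (β, γ, p): e'_{1,c} = e_{1,c} for all c ∈ C and e'_{2,c,c'} = e_{2,c,c'} for all c, c' ∈ C. -/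
lemma card_filter_lt' (N m : ℕ) (hm : m ≤ N) :
    (Finset.univ.filter (fun k : Fin N => (k : ℕ) < m)).card = m := by
  have h : (Finset.univ.filter (fun k : Fin N => (k : ℕ) < m)).image Fin.val
      = Finset.range m := by
    ext x
    simp only [Finset.mem_image, Finset.mem_filter, Finset.mem_univ, true_and,
      Finset.mem_range]
    constructor
    · rintro ⟨k, hk, rfl⟩; exact hk
    · intro hx; exact ⟨⟨x, lt_of_lt_of_le hx hm⟩, hx, rfl⟩
  calc (Finset.univ.filter (fun k : Fin N => (k : ℕ) < m)).card
      = ((Finset.univ.filter (fun k : Fin N => (k : ℕ) < m)).image Fin.val).card :=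
        (Finset.card_image_of_injective _ Fin.val_injective).symm
    _ = m := by rw [h, Finset.card_range]

lemma bound_lemma' (β' M K a b : ℝ) (ha : 0 ≤ a) (hb : 0 ≤ b) (hba : b ≤ a)
    (hsum : a + b = β') (hprod : a * b = K) (hβ'1 : β' ≤ 1)
    (hM : 1/2 ≤ M) (hM1 : M ≤ 1)
    (hup : β' ≤ M + K / M)
    (hI2' : M < 1 → β' ≤ 2*(1-M) ∨ 1 - M + K/(1-M) ≤ β')
    (hK1 : M = 1 → K = 0) :
    a ≤ M ∧ b ≤ 1 - M := by
  have hMpos : 0 < M := by linarith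
  have hKM : K / M * M = K := div_mul_cancel₀ _ (ne_of_gt hMpos)
  have hq : M^2 - β'*M + K ≥ 0 := by nlinarith [mul_le_mul_of_nonneg_right hup hMpos.le]
  have haM : a ≤ M := by nlinarith
  refine ⟨haM, ?_⟩
  rcases eq_or_lt_of_le hM1 with h1 | h1
  · have hK0 : K = 0 := hK1 h1
    have : b = 0 := by nlinarith
    linarith
  · rcases hI2' h1 with h | h
    · linarith
    · have h1M : 0 < 1 - M := by linarith
      have hKM2 : K / (1-M) * (1-M) = K := div_mul_cancel₀ _ (ne_of_gt h1M)
      have hq2 : (1-M)^2 - β'*(1-M) + K ≤ 0 := by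
        nlinarith [mul_le_mul_of_nonneg_right h h1M.le]
      nlinarith

set_option maxHeartbeats 2000000 in
/-- Proposition 6: in the two-category case the double coincidence expectations do not
determine β uniquely: certain β' admit a coder model (β', γ', p') with the same
expectation values. -/
theorem stmt_19 {C : Type*} [Fintype C] [DecidableEq C]
    {N : ℕ} (hN : 1 ≤ N) (γ : Fin N → C)
    (β : ℝ) (hβ0 : 0 ≤ β) (hβ1 : β ≤ 1)
    (p : C → ℝ) (hp0 : ∀ c, 0 ≤ p c) (hp1 : ∀ c, p c ≤ 1) (hpsum : ∑ c, p c = 1)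
    (τ : C → ℝ)
    (hτ : ∀ c, τ c = ((Finset.univ.filter (fun k : Fin N => γ k = c)).card : ℝ) / (N : ℝ))
    (e1 : C → ℝ) (he1 : ∀ c, e1 c = β * τ c + (1 - β) * p c)
    (e2p : C → C → ℝ)
    (he2p : ∀ c₁ c₂, e2p c₁ c₂ = β ^ 2 * (if c₁ = c₂ then 1 else 0) * τ c₁
      + β * (1 - β) * (τ c₁ * p c₂ + τ c₂ * p c₁) + (1 - β) ^ 2 * p c₁ * p c₂)
    -- exactly two categories
    (c₁ c₂ : C) (hne : c₁ ≠ c₂) (htwo : ∀ c : C, c = c₁ ∨ c = c₂)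
    (hτlt : ∀ c, τ c < 1)
    (β' : ℝ) (hβ'0 : 0 ≤ β') (hβ'1 : β' ≤ 1)
    -- β' lies in the interval of indeterminacy …
    (hmem : β' ∈ Set.Icc (2 * β * Real.sqrt (τ c₁ * (1 - τ c₁)))
      (max (e1 c₁) (e1 c₂) + β ^ 2 * τ c₁ * (1 - τ c₁) / max (e1 c₁) (e1 c₂)))
    -- … intersected with the set I
    (hI1 : max (e1 c₁) (e1 c₂) = 1 → β' ∈ Set.Icc (0 : ℝ) 1)
    (hI2 : max (e1 c₁) (e1 c₂) < 1 →
      β' ∈ Set.Icc (0 : ℝ) (2 * (1 - max (e1 c₁) (e1 c₂))) ∪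
        Set.Icc (1 - max (e1 c₁) (e1 c₂)
          + β ^ 2 * τ c₁ * (1 - τ c₁) / (1 - max (e1 c₁) (e1 c₂))) 1)
    -- β'² = 4β²τ₁(1−τ₁)/(1 − n²/N²) for some n ∈ {1,…,N} with n+N even
    (hn : ∃ n : ℕ, 1 ≤ n ∧ n ≤ N ∧ Even (n + N) ∧
      β' ^ 2 = 4 * β ^ 2 * τ c₁ * (1 - τ c₁) / (1 - (n : ℝ) ^ 2 / (N : ℝ) ^ 2)) :
    ∃ (γ' : Fin N → C) (p' : C → ℝ),
      (∀ c, 0 ≤ p' c ∧ p' c ≤ 1) ∧ (∑ c, p' c = 1) ∧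
      (∀ c : C,
        β' * (((Finset.univ.filter (fun k : Fin N => γ' k = c)).card : ℝ) / (N : ℝ))
          + (1 - β') * p' c = e1 c) ∧
      (∀ ca cb : C,
        β' ^ 2 * (if ca = cb then 1 else 0)
            * (((Finset.univ.filter (fun k : Fin N => γ' k = ca)).card : ℝ) / (N : ℝ))
          + β' * (1 - β')
            * ((((Finset.univ.filter (fun k : Fin N => γ' k = ca)).card : ℝ) / (N : ℝ)) * p' cb
              + (((Finset.univ.filter (fun k : Fin N => γ' k = cb)).card : ℝ) / (N : ℝ)) * p' ca)
          + (1 - β') ^ 2 * p' ca * p' cb = e2p ca cb) := by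
  have hN0 : (0:ℝ) < N := by exact_mod_cast hN
  have hNne : (N:ℝ) ≠ 0 := ne_of_gt hN0
  have huniv : (Finset.univ : Finset C) = {c₁, c₂} := by
    ext c
    simp only [Finset.mem_univ, Finset.mem_insert, Finset.mem_singleton, true_iff]
    exact htwo c
  have hτ0 : ∀ c, 0 ≤ τ c := by
    intro c; rw [hτ]; positivity
  have hτle : ∀ c, τ c ≤ 1 := by
    intro c; rw [hτ]
    rw [div_le_one hN0]
    have := Finset.card_filter_le (Finset.univ : Finset (Fin N)) (fun k => γ k = c)
    have h2 : (Finset.univ : Finset (Fin N)).card = N := by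
      rw [Finset.card_univ, Fintype.card_fin]
    exact_mod_cast h2 ▸ this
  have hcardγsum : (Finset.univ.filter (fun k : Fin N => γ k = c₁)).card
      + (Finset.univ.filter (fun k : Fin N => γ k = c₂)).card = N := by
    have hflip : Finset.univ.filter (fun k : Fin N => γ k = c₂)
        = Finset.univ.filter (fun k : Fin N => ¬ γ k = c₁) := by
      ext k
      simp only [Finset.mem_filter, Finset.mem_univ, true_and]
      rcases htwo (γ k) with h | h <;> simp [h, hne, hne.symm]
    rw [hflip]
    rw [Finset.card_filter_add_card_filter_not]
    rw [Finset.card_univ, Fintype.card_fin]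
  have hτsum : τ c₁ + τ c₂ = 1 := by
    rw [hτ, hτ, ← add_div, div_eq_one_iff_eq hNne]
    exact_mod_cast hcardγsum
  have hτ2 : τ c₂ = 1 - τ c₁ := by linarith
  have hpsum2 : p c₁ + p c₂ = 1 := by
    rw [huniv, Finset.sum_pair hne] at hpsum; exact hpsum
  have he1sum : e1 c₁ + e1 c₂ = 1 := by
    rw [he1, he1]; linear_combination β*hτsum + (1-β)*hpsum2
  have he1_0 : ∀ c, 0 ≤ e1 c := by
    intro c; rw [he1]
    exact add_nonneg (mul_nonneg hβ0 (hτ0 c)) (mul_nonneg (by linarith) (hp0 c))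
  have he1_1 : ∀ c, e1 c ≤ 1 := by
    intro c
    rcases htwo c with rfl | rfl
    · linarith [he1_0 c₂]
    · linarith [he1_0 c₁]
  have hKK : β ^ 2 * τ c₁ * (1 - τ c₁) = β^2*(τ c₁ * τ c₂) := by rw [hτ2]; ring
  obtain ⟨hlo, hup⟩ := hmem
  -- key construction of m
  have key : ∃ m : ℕ, m ≤ N ∧
      β'^2 * ((m:ℝ)/N) * (1 - (m:ℝ)/N) = β^2 * (τ c₁ * τ c₂) ∧
      β' * ((m:ℝ)/N) ≤ e1 c₁ ∧ β' * (1 - (m:ℝ)/N) ≤ e1 c₂ := by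
    rcases eq_or_lt_of_le hβ'0 with hb0 | hb0
    · -- β' = 0
      have hx : 0 ≤ τ c₁ * (1 - τ c₁) :=
        mul_nonneg (hτ0 c₁) (by linarith [hτle c₁])
      have hz : β * Real.sqrt (τ c₁*(1-τ c₁)) = 0 := by
        have h1 : 0 ≤ β * Real.sqrt (τ c₁*(1-τ c₁)) :=
          mul_nonneg hβ0 (Real.sqrt_nonneg _)
        nlinarith [hlo, hb0]
      have hKzero : β^2*(τ c₁ * τ c₂) = 0 := by
        have h2 := congrArg (·^2) hz
        simp only [mul_pow, Real.sq_sqrt hx] at h2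
        rw [hτ2]; linear_combination h2
      refine ⟨N, le_rfl, ?_, ?_, ?_⟩
      · rw [← hb0]; simpa using hKzero.symm
      · rw [← hb0]; simpa using he1_0 c₁
      · rw [← hb0]; simpa using he1_0 c₂
    · -- β' > 0
      obtain ⟨n, hn1, hnN, hpar, heq⟩ := hn
      have hnltN : n < N := by
        rcases eq_or_lt_of_le hnN with h | h
        · exfalso
          rw [h] at heq
          have hd : (1 - (N:ℝ)^2/(N:ℝ)^2) = 0 := by field_simp; norm_num
          rw [hd, div_zero] at heq
          nlinarith
        · exact h
      have hnR : (n:ℝ) < N := by exact_mod_cast hnltN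
      have hnR0 : (0:ℝ) ≤ n := Nat.cast_nonneg n
      have hden : 0 < 1 - (n:ℝ)^2/(N:ℝ)^2 := by
        rw [sub_pos, div_lt_one (by positivity)]
        nlinarith
      have hKeq : β'^2 * (1 - (n:ℝ)^2/(N:ℝ)^2) = 4 * (β^2 * (τ c₁ * τ c₂)) := by
        rw [heq, div_mul_cancel₀ _ (ne_of_gt hden), hτ2]; ring
      have hEpar : Even (N + n) := by rwa [add_comm] at hpar
      obtain ⟨k, hk⟩ := hEpar
      rcases le_total (e1 c₂) (e1 c₁) with hge | hge
      · -- e1 c₁ is max, take m = (N+n)/2 = k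
        have hmN : k ≤ N := by omega
        have hmr : 2*(k:ℝ) = (N:ℝ) + n := by
          have : 2*k = N + n := by omega
          exact_mod_cast this
        have hKey : β'^2 * ((k:ℝ)/N) * (1 - (k:ℝ)/N) = β^2 * (τ c₁ * τ c₂) := by
          have h1 : β'^2 * ((k:ℝ)/N) * (1 - (k:ℝ)/N)
              = β'^2 * (1 - (n:ℝ)^2/(N:ℝ)^2)/4 := by
            rw [show (k:ℝ) = ((N:ℝ)+(n:ℝ))/2 by linarith]
            field_simp
            ring
          rw [h1, hKeq]; ring
        have hThalf : 1/2 ≤ (k:ℝ)/N := by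
          rw [le_div_iff₀ hN0]; linarith
        have hTle1 : (k:ℝ)/N ≤ 1 := by
          rw [div_le_one hN0]; exact_mod_cast hmN
        have hmax : max (e1 c₁) (e1 c₂) = e1 c₁ := max_eq_left hge
        rw [hmax, hKK] at hup
        have hI2' : e1 c₁ < 1 → β' ≤ 2*(1-e1 c₁) ∨
            1 - e1 c₁ + (β^2*(τ c₁ * τ c₂))/(1-e1 c₁) ≤ β' := by
          intro h
          have h3 := hI2 (by rw [hmax]; exact h)
          rw [hmax] at h3
          rcases h3 with h3 | h3
          · left; exact h3.2
          · right; rw [hKK] at h3; exact h3.1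
        have hK1 : e1 c₁ = 1 → β^2*(τ c₁ * τ c₂) = 0 := by
          intro h
          have h2 : e1 c₂ = 0 := by linarith
          rw [he1] at h2
          have ht : β * τ c₂ = 0 := by
            have h4 : 0 ≤ (1-β) * p c₂ := mul_nonneg (by linarith) (hp0 c₂)
            have h5 : 0 ≤ β * τ c₂ := mul_nonneg hβ0 (hτ0 c₂)
            linarith
          linear_combination (β * τ c₁) * ht
        obtain ⟨hA, hB⟩ := bound_lemma' β' (e1 c₁) (β^2*(τ c₁ * τ c₂))
          (β' * ((k:ℝ)/N)) (β' * (1 - (k:ℝ)/N))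
          (mul_nonneg hβ'0 (by positivity))
          (mul_nonneg hβ'0 (by linarith))
          (mul_le_mul_of_nonneg_left (by linarith) hβ'0)
          (by ring) (by linear_combination hKey) hβ'1
          (by linarith [he1sum]) (he1_1 c₁) hup hI2' hK1
        exact ⟨k, hmN, hKey, hA, by linarith⟩
      · -- e1 c₂ is max, take m = (N-n)/2 = k - n
        have hkn : n ≤ k := by omega
        have hmN : k - n ≤ N := by omega
        have hmr : 2*((k-n:ℕ):ℝ) = (N:ℝ) - n := by
          have h3 : 2*(k-n) + n = N := by omega
          have h4 : ((2*(k-n) + n : ℕ) : ℝ) = ((N : ℕ) : ℝ) := by rw [h3]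
          push_cast at h4
          linarith
        have hKey : β'^2 * (((k-n:ℕ):ℝ)/N) * (1 - ((k-n:ℕ):ℝ)/N)
            = β^2 * (τ c₁ * τ c₂) := by
          have h1 : β'^2 * (((k-n:ℕ):ℝ)/N) * (1 - ((k-n:ℕ):ℝ)/N)
              = β'^2 * (1 - (n:ℝ)^2/(N:ℝ)^2)/4 := by
            rw [show ((k-n:ℕ):ℝ) = ((N:ℝ)-(n:ℝ))/2 by linarith]
            field_simp
            ring
          rw [h1, hKeq]; ring
        have hThalf : ((k-n:ℕ):ℝ)/N ≤ 1/2 := by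
          rw [div_le_iff₀ hN0]; linarith [hmr, hnR0]
        have hT0 : 0 ≤ ((k-n:ℕ):ℝ)/N := by positivity
        have hmax : max (e1 c₁) (e1 c₂) = e1 c₂ := max_eq_right hge
        rw [hmax, hKK] at hup
        have hI2' : e1 c₂ < 1 → β' ≤ 2*(1-e1 c₂) ∨
            1 - e1 c₂ + (β^2*(τ c₁ * τ c₂))/(1-e1 c₂) ≤ β' := by
          intro h
          have h3 := hI2 (by rw [hmax]; exact h)
          rw [hmax] at h3
          rcases h3 with h3 | h3
          · left; exact h3.2
          · right; rw [hKK] at h3; exact h3.1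
        have hK1 : e1 c₂ = 1 → β^2*(τ c₁ * τ c₂) = 0 := by
          intro h
          have h2 : e1 c₁ = 0 := by linarith
          rw [he1] at h2
          have ht : β * τ c₁ = 0 := by
            have h4 : 0 ≤ (1-β) * p c₁ := mul_nonneg (by linarith) (hp0 c₁)
            have h5 : 0 ≤ β * τ c₁ := mul_nonneg hβ0 (hτ0 c₁)
            linarith
          linear_combination (β * τ c₂) * ht
        obtain ⟨hA, hB⟩ := bound_lemma' β' (e1 c₂) (β^2*(τ c₁ * τ c₂))
          (β' * (1 - ((k-n:ℕ):ℝ)/N)) (β' * (((k-n:ℕ):ℝ)/N))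
          (mul_nonneg hβ'0 (by linarith))
          (mul_nonneg hβ'0 hT0)
          (mul_le_mul_of_nonneg_left (by linarith) hβ'0)
          (by ring) (by linear_combination hKey) hβ'1
          (by linarith [he1sum]) (he1_1 c₂) hup hI2' hK1
        exact ⟨k - n, hmN, hKey, by linarith, hA⟩
  obtain ⟨m, hmN, hKey, hb1, hb2⟩ := key
  obtain ⟨P, hPdef⟩ : ∃ P : ℝ, P = (e1 c₁ - β' * ((m:ℝ)/N))/(1-β') := ⟨_, rfl⟩
  have hE1 : β' * ((m:ℝ)/N) + (1-β') * P = e1 c₁ := by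
    rcases eq_or_lt_of_le hβ'1 with h1 | h1
    · have hb1' := hb1
      have hb2' := hb2
      rw [h1] at hb1' hb2'
      simp only [one_mul] at hb1' hb2'
      have hT1 : (m:ℝ)/N = e1 c₁ := by linarith
      rw [h1, hT1]; ring
    · have h1' : (1:ℝ) - β' ≠ 0 := ne_of_gt (by linarith)
      rw [hPdef]; field_simp; ring
  have hE2 : β' * (1 - (m:ℝ)/N) + (1-β') * (1-P) = e1 c₂ := by
    linear_combination -he1sum - hE1
  have hP0 : 0 ≤ P := hPdef ▸ div_nonneg (by linarith) (by linarith)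
  have hP1 : P ≤ 1 := by
    rcases eq_or_lt_of_le hβ'1 with h1 | h1
    · rw [hPdef, h1]; simp
    · rw [hPdef, div_le_one (by linarith)]
      linarith
  have hE1' : β' * ((m:ℝ)/N) + (1-β') * P = β * τ c₁ + (1-β) * p c₁ := by
    rw [← he1 c₁]; exact hE1
  have hE2' : β' * (1 - (m:ℝ)/N) + (1-β') * (1-P) = β * τ c₂ + (1-β) * p c₂ := by
    rw [← he1 c₂]; exact hE2
  refine ⟨fun k : Fin N => if (k:ℕ) < m then c₁ else c₂,
      fun c => if c = c₁ then P else 1 - P, ?_, ?_, ?_, ?_⟩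
  · intro c
    by_cases hc : c = c₁ <;> simp [hc] <;> constructor <;> linarith
  · rw [huniv, Finset.sum_pair hne]
    rw [if_pos rfl, if_neg (Ne.symm hne)]; ring
  · -- e1 equations
    have hcard1 : (Finset.univ.filter
        (fun k : Fin N => (if (k:ℕ) < m then c₁ else c₂) = c₁)).card = m := by
      have hset : Finset.univ.filter
          (fun k : Fin N => (if (k:ℕ) < m then c₁ else c₂) = c₁)
          = Finset.univ.filter (fun k : Fin N => (k:ℕ) < m) := by
        ext k
        simp only [Finset.mem_filter, Finset.mem_univ, true_and]
        by_cases h : (k:ℕ) < m <;> simp [h, hne, hne.symm]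
      rw [hset, card_filter_lt' N m hmN]
    have hcard2 : (Finset.univ.filter
        (fun k : Fin N => (if (k:ℕ) < m then c₁ else c₂) = c₂)).card = N - m := by
      have hset : Finset.univ.filter
          (fun k : Fin N => (if (k:ℕ) < m then c₁ else c₂) = c₂)
          = Finset.univ.filter (fun k : Fin N => m ≤ (k:ℕ)) := by
        ext k
        simp only [Finset.mem_filter, Finset.mem_univ, true_and]
        by_cases h : (k:ℕ) < m
        · rw [if_pos h]; simp only [hne, false_iff]; omega
        · rw [if_neg h]; simp only [true_iff]; omega
      have hadd := Finset.card_filter_add_card_filter_not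
        (s := (Finset.univ : Finset (Fin N))) (p := fun k : Fin N => (k:ℕ) < m)
      simp only [not_lt] at hadd
      rw [Finset.card_univ, Fintype.card_fin, card_filter_lt' N m hmN] at hadd
      rw [hset]
      omega
    have hc2cast : ((N - m : ℕ):ℝ)/N = 1 - (m:ℝ)/N := by
      rw [Nat.cast_sub hmN]; field_simp
    intro c
    rcases htwo c with h | h <;> rw [h]
    · rw [hcard1]
      simpa using hE1
    · rw [hcard2, hc2cast]
      simpa [Ne.symm hne] using hE2
  · -- e2 equations
    have hcard1 : (Finset.univ.filter
        (fun k : Fin N => (if (k:ℕ) < m then c₁ else c₂) = c₁)).card = m := by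
      have hset : Finset.univ.filter
          (fun k : Fin N => (if (k:ℕ) < m then c₁ else c₂) = c₁)
          = Finset.univ.filter (fun k : Fin N => (k:ℕ) < m) := by
        ext k
        simp only [Finset.mem_filter, Finset.mem_univ, true_and]
        by_cases h : (k:ℕ) < m <;> simp [h, hne, hne.symm]
      rw [hset, card_filter_lt' N m hmN]
    have hcard2 : (Finset.univ.filter
        (fun k : Fin N => (if (k:ℕ) < m then c₁ else c₂) = c₂)).card = N - m := by
      have hset : Finset.univ.filter
          (fun k : Fin N => (if (k:ℕ) < m then c₁ else c₂) = c₂)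
          = Finset.univ.filter (fun k : Fin N => m ≤ (k:ℕ)) := by
        ext k
        simp only [Finset.mem_filter, Finset.mem_univ, true_and]
        by_cases h : (k:ℕ) < m
        · rw [if_pos h]; simp only [hne, false_iff]; omega
        · rw [if_neg h]; simp only [true_iff]; omega
      have hadd := Finset.card_filter_add_card_filter_not
        (s := (Finset.univ : Finset (Fin N))) (p := fun k : Fin N => (k:ℕ) < m)
      simp only [not_lt] at hadd
      rw [Finset.card_univ, Fintype.card_fin, card_filter_lt' N m hmN] at hadd
      rw [hset]
      omega
    have hc2cast : ((N - m : ℕ):ℝ)/N = 1 - (m:ℝ)/N := by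
      rw [Nat.cast_sub hmN]; field_simp
    intro ca cb
    rcases htwo ca with h | h <;> rcases htwo cb with h2 | h2 <;> rw [h, h2]
    · rw [he2p, hcard1]
      simp only [eq_self_iff_true, if_true, ite_true]
      linear_combination (β'*((m:ℝ)/N) + (1-β')*P + β*τ c₁ + (1-β)*p c₁) * hE1'
        + hKey + β^2 * τ c₁ * hτsum
    · rw [he2p, hcard1, hcard2, hc2cast]
      simp only [hne, Ne.symm hne, eq_self_iff_true, if_true, ite_true, if_false,
        ite_false]
      linear_combination (β'*(1-(m:ℝ)/N) + (1-β')*(1-P)) * hE1'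
        + (β*τ c₁ + (1-β)*p c₁) * hE2' - hKey
    · rw [he2p, hcard1, hcard2, hc2cast]
      simp only [hne, Ne.symm hne, eq_self_iff_true, if_true, ite_true, if_false,
        ite_false]
      linear_combination (β'*((m:ℝ)/N) + (1-β')*P) * hE2'
        + (β*τ c₂ + (1-β)*p c₂) * hE1' - hKey
    · rw [he2p, hcard2, hc2cast]
      simp only [hne, Ne.symm hne, eq_self_iff_true, if_true, ite_true, if_false,
        ite_false]
      linear_combination (β'*(1-(m:ℝ)/N) + (1-β')*(1-P) + β*τ c₂ + (1-β)*p c₂) * hE2'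
        + hKey + β^2 * τ c₂ * hτsum
end
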